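/- Let S be a monoid and let A be an S-act whose unique decomposition into indecomposable subacts is A = ⨆_{i∈I} A_i. For i, j ∈ I define i ∼ j if and only if A_i ≅ A_j, and for i ∈ I let [i] = {j ∈ I : A_i ≅ A_j} be its equivalence class. Assume the set P = {Card [i] : i ∈ I} of cardinalities of equivalence classes is finite. Then A is cancellable if and only if the equivalence class [i] is finite for every i ∈ I. -/

import Mathlib

universe u v w

/-- A right `S`-act structure on a type `A`: a map `A × S → A`, `(a, s) ↦ a · s`,
with `a · 1 = a` and `a · (s*t) = (a · s) · t`. (`S`-acts are additionally required
to be nonempty; this is imposed via `Nonempty` hypotheses.) -/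
class RAct (S : Type u) [Monoid S] (A : Type v) : Type (max u v) where
  act : A → S → A
  act_one : ∀ a : A, act a 1 = a
  act_mul : ∀ (a : A) (s t : S), act a (s * t) = act (act a s) t

/-- Isomorphism of `S`-acts: a bijective action-preserving map. -/
def ActIso (S : Type u) [Monoid S] (A : Type v) (B : Type w) [RAct S A] [RAct S B] : Prop :=
  ∃ e : A ≃ B, ∀ (a : A) (s : S), e (RAct.act a s) = RAct.act (e a) s

/-- The coproduct (disjoint union) of two `S`-acts, with componentwise action. -/
instance sumRAct (S : Type u) [Monoid S] (A : Type v) (B : Type w) [RAct S A] [RAct S B] :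
    RAct S (A ⊕ B) where
  act x s := Sum.map (fun a => RAct.act a s) (fun b => RAct.act b s) x
  act_one := by rintro (a | b) <;> simp [RAct.act_one]
  act_mul := by rintro (a | b) s t <;> simp [RAct.act_mul]

/-- An `S`-act `A` is cancellable if `A ⊔ B ≅ A ⊔ C` implies `B ≅ C`
for all `S`-acts `B`, `C`. -/
def Cancellable (S : Type u) [Monoid S] (A : Type u) [RAct S A] : Prop :=
  ∀ (B C : Type u) [RAct S B] [RAct S C] [Nonempty B] [Nonempty C],
    ActIso S (A ⊕ B) (A ⊕ C) → ActIso S B C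

/-- A subact of an `S`-act: a nonempty subset closed under the action. -/
def IsSubact (S : Type u) [Monoid S] {A : Type v} [RAct S A] (T : Set A) : Prop :=
  T.Nonempty ∧ ∀ a ∈ T, ∀ s : S, RAct.act a s ∈ T

/-- The induced `S`-act structure on a subact. -/
def IsSubact.ract {S : Type u} [Monoid S] {A : Type v} [RAct S A] {T : Set A}
    (hT : IsSubact S T) : RAct S T where
  act a s := ⟨RAct.act a.1 s, hT.2 a.1 a.2 s⟩
  act_one a := Subtype.ext (RAct.act_one a.1)
  act_mul a s t := Subtype.ext (RAct.act_mul a.1 s t)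

/-- Two subacts are isomorphic if they are isomorphic as `S`-acts with the
induced actions. -/
def SubactIso {S : Type u} [Monoid S] {A : Type v} {A' : Type w} [RAct S A] [RAct S A']
    {T : Set A} {U : Set A'} (hT : IsSubact S T) (hU : IsSubact S U) : Prop :=
  @ActIso S _ T U hT.ract hU.ract

/-- A subact `T` is indecomposable if it is not the disjoint union of two subacts. -/
def IndecompSubact (S : Type u) [Monoid S] {A : Type v} [RAct S A] (T : Set A) : Prop :=
  IsSubact S T ∧
    ¬ ∃ U V : Set A, IsSubact S U ∧ IsSubact S V ∧ U ∪ V = T ∧ U ∩ V = ∅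

section Lemmas
variable (S : Type u) [Monoid S]

theorem ActIso.refl (A : Type v) [RAct S A] : ActIso S A A :=
  ⟨Equiv.refl A, fun _ _ => rfl⟩

theorem ActIso.symm {A : Type v} {B : Type w} [RAct S A] [RAct S B]
    (h : ActIso S A B) : ActIso S B A := by
  obtain ⟨e, he⟩ := h
  refine ⟨e.symm, fun b s => ?_⟩
  apply e.injective
  rw [he, e.apply_symm_apply, e.apply_symm_apply]

theorem ActIso.trans {A : Type u} {B : Type v} {C : Type w} [RAct S A] [RAct S B] [RAct S C]
    (h1 : ActIso S A B) (h2 : ActIso S B C) : ActIso S A C := by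
  obtain ⟨e, he⟩ := h1; obtain ⟨f, hf⟩ := h2
  exact ⟨e.trans f, fun a s => by simp [he, hf]⟩

theorem ActIso.sumCongr {A B C D : Type v} [RAct S A] [RAct S B] [RAct S C] [RAct S D]
    (h1 : ActIso S A B) (h2 : ActIso S C D) : ActIso S (A ⊕ C) (B ⊕ D) := by
  obtain ⟨e, he⟩ := h1; obtain ⟨f, hf⟩ := h2
  refine ⟨Equiv.sumCongr e f, ?_⟩
  rintro (a | c) s <;> simp [RAct.act, he, hf]

theorem ActIso.sumComm (A B : Type v) [RAct S A] [RAct S B] : ActIso S (A ⊕ B) (B ⊕ A) := by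
  refine ⟨Equiv.sumComm A B, ?_⟩
  rintro (a | b) s <;> rfl

theorem ActIso.sumAssoc (A B C : Type v) [RAct S A] [RAct S B] [RAct S C] :
    ActIso S ((A ⊕ B) ⊕ C) (A ⊕ (B ⊕ C)) := by
  refine ⟨Equiv.sumAssoc A B C, ?_⟩
  rintro ((a | b) | c) s <;> rfl

instance sigmaRAct {ι : Type v} (F : ι → Type w) [∀ i, RAct S (F i)] :
    RAct S (Σ i, F i) where
  act x s := ⟨x.1, RAct.act x.2 s⟩
  act_one x := by cases x; simp [RAct.act_one]
  act_mul x s t := by cases x; simp [RAct.act_mul]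

theorem ActIso.sigmaCongr {ι ι' : Type v} (F : ι → Type w) (G : ι' → Type w)
    [∀ i, RAct S (F i)] [∀ i, RAct S (G i)] (e : ι ≃ ι')
    (h : ∀ i, ActIso S (F i) (G (e i))) : ActIso S (Σ i, F i) (Σ i, G i) := by
  choose f hf using h
  refine ⟨Equiv.sigmaCongr e f, ?_⟩
  rintro ⟨i, x⟩ s
  show (⟨e i, f i (RAct.act x s)⟩ : Σ i, G i) = ⟨e i, RAct.act (f i x) s⟩
  rw [hf]

theorem ActIso.sigmaSum {ι κ : Type v} (F : ι ⊕ κ → Type w) [∀ i, RAct S (F i)] :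
    ActIso S (Σ x, F x) ((Σ i, F (Sum.inl i)) ⊕ (Σ k, F (Sum.inr k))) := by
  refine ⟨⟨fun x => match x with
      | ⟨Sum.inl i, y⟩ => Sum.inl ⟨i, y⟩
      | ⟨Sum.inr k, y⟩ => Sum.inr ⟨k, y⟩,
    fun x => match x with
      | Sum.inl ⟨i, y⟩ => ⟨Sum.inl i, y⟩
      | Sum.inr ⟨k, y⟩ => ⟨Sum.inr k, y⟩, ?_, ?_⟩, ?_⟩
  · rintro ⟨(i | k), y⟩ <;> rfl
  · rintro (⟨i, y⟩ | ⟨k, y⟩) <;> rfl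
  · rintro ⟨(i | k), y⟩ s <;> rfl

theorem ActIso.sigmaPUnit (A : Type v) [RAct S A] :
    ActIso S (Σ _ : PUnit.{w+1}, A) A := by
  refine ⟨⟨fun x => x.2, fun a => ⟨PUnit.unit, a⟩, ?_, ?_⟩, ?_⟩
  · rintro ⟨⟨⟩, a⟩; rfl
  · intro a; rfl
  · rintro ⟨⟨⟩, a⟩ s; rfl

end Lemmas

section Conn
variable (S : Type u) [Monoid S]

def connStep (A : Type v) [RAct S A] (a b : A) : Prop := ∃ s : S, b = RAct.act a s

def connSetoid (A : Type v) [RAct S A] : Setoid A :=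
  ⟨Relation.EqvGen (connStep S A), Relation.EqvGen.is_equivalence _⟩

abbrev CQ (A : Type v) [RAct S A] : Type v := Quotient (connSetoid S A)

def cmk {A : Type v} [RAct S A] (a : A) : CQ S A := Quotient.mk (connSetoid S A) a

theorem cmk_act {A : Type v} [RAct S A] (a : A) (s : S) : cmk S (RAct.act a s) = cmk S a :=
  (Quotient.sound (Relation.EqvGen.symm _ _ (Relation.EqvGen.rel _ _ ⟨s, rfl⟩)))

def cfiber {A : Type v} [RAct S A] (q : CQ S A) : Set A := {a | cmk S a = q}

theorem cfiber_subact {A : Type v} [RAct S A] (q : CQ S A) : IsSubact S (cfiber S q) := by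
  constructor
  · obtain ⟨a, ha⟩ := Quotient.exists_rep q
    exact ⟨a, ha⟩
  · intro a ha s
    simp only [cfiber, Set.mem_setOf_eq] at *
    rw [cmk_act, ha]

instance cfiberRAct {A : Type v} [RAct S A] (q : CQ S A) : RAct S (cfiber S q) :=
  (cfiber_subact S q).ract

theorem sigma_cfiber_ext {A : Type v} [RAct S A] {q q' : CQ S A} (h : q = q')
    (x : cfiber S q) (x' : cfiber S q') (hx : x.1 = x'.1) :
    (⟨q, x⟩ : Σ q, cfiber S q) = ⟨q', x'⟩ := by
  subst h
  rw [Subtype.ext hx]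

/-- Decomposition of an act into its connected components. -/
theorem actIso_sigma_cfiber (A : Type v) [RAct S A] :
    ActIso S A (Σ q : CQ S A, cfiber S q) := by
  refine ⟨⟨fun a => ⟨cmk S a, ⟨a, rfl⟩⟩, fun x => x.2.1, fun a => rfl, ?_⟩, ?_⟩
  · rintro ⟨q, ⟨a, h⟩⟩
    exact sigma_cfiber_ext S h _ _ rfl
  · intro a s
    exact sigma_cfiber_ext S (cmk_act S a s) _ _ rfl

/-- Transport of components under an act isomorphism. -/
theorem conn_map {A : Type v} {B : Type w} [RAct S A] [RAct S B] (e : A ≃ B)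
    (he : ∀ (a : A) (s : S), e (RAct.act a s) = RAct.act (e a) s) (a a' : A)
    (h : Relation.EqvGen (connStep S A) a a') : Relation.EqvGen (connStep S B) (e a) (e a') := by
  induction h with
  | rel x y hxy => obtain ⟨s, rfl⟩ := hxy; exact Relation.EqvGen.rel _ _ ⟨s, he x s⟩
  | refl x => exact Relation.EqvGen.refl _
  | symm x y _ ih => exact Relation.EqvGen.symm _ _ ih
  | trans x y z _ _ ih1 ih2 => exact Relation.EqvGen.trans _ _ _ ih1 ih2

theorem conn_iff {A : Type v} {B : Type w} [RAct S A] [RAct S B] (e : A ≃ B)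
    (he : ∀ (a : A) (s : S), e (RAct.act a s) = RAct.act (e a) s) (a a' : A) :
    Relation.EqvGen (connStep S A) a a' ↔ Relation.EqvGen (connStep S B) (e a) (e a') := by
  constructor
  · exact conn_map S e he a a'
  · intro h
    have he' : ∀ (b : B) (s : S), e.symm (RAct.act b s) = RAct.act (e.symm b) s := by
      intro b s; apply e.injective; rw [he, e.apply_symm_apply, e.apply_symm_apply]
    have := conn_map S e.symm he' _ _ h
    simpa using this

/-- The equivalence of component quotients induced by an act iso. -/
noncomputable def cqEquiv {A : Type v} {B : Type w} [RAct S A] [RAct S B] (e : A ≃ B)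
    (he : ∀ (a : A) (s : S), e (RAct.act a s) = RAct.act (e a) s) : CQ S A ≃ CQ S B :=
  Quotient.congr e (conn_iff S e he)

theorem cqEquiv_mk {A : Type v} {B : Type w} [RAct S A] [RAct S B] (e : A ≃ B)
    (he : ∀ (a : A) (s : S), e (RAct.act a s) = RAct.act (e a) s) (a : A) :
    cqEquiv S e he (cmk S a) = cmk S (e a) := rfl

theorem cfiber_actIso {A : Type v} {B : Type w} [RAct S A] [RAct S B] (e : A ≃ B)
    (he : ∀ (a : A) (s : S), e (RAct.act a s) = RAct.act (e a) s) (q : CQ S A) :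
    ActIso S (cfiber S q) (cfiber S (cqEquiv S e he q)) := by
  refine ⟨⟨fun x => ⟨e x.1, ?_⟩, fun y => ⟨e.symm y.1, ?_⟩, ?_, ?_⟩, ?_⟩
  · have hx : cmk S x.1 = q := x.2
    show cmk S (e x.1) = cqEquiv S e he q
    rw [← cqEquiv_mk S e he, hx]
  · have hy : cmk S y.1 = cqEquiv S e he q := y.2
    show cmk S (e.symm y.1) = q
    apply (cqEquiv S e he).injective
    rw [cqEquiv_mk, e.apply_symm_apply, hy]
  · intro x; apply Subtype.ext; simp
  · intro y; apply Subtype.ext; simp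
  · intro x s
    apply Subtype.ext
    exact he x.1 s

end Conn

section SumConn
variable (S : Type u) [Monoid S]

theorem actIso_of_eq {A : Type v} [RAct S A] {U V : Set A} (h : U = V)
    (hU : IsSubact S U) (hV : IsSubact S V) : @ActIso S _ U V hU.ract hV.ract := by
  subst h
  exact ⟨Equiv.refl _, fun a s => rfl⟩

variable {A : Type u} {B : Type u} [RAct S A] [RAct S B]

private def unInl {V : Set A} : ∀ x : A ⊕ B, x ∈ (Sum.inl '' V : Set (A ⊕ B)) → V
  | Sum.inl a, h => ⟨a, by rcases h with ⟨v, hv, hvq⟩; cases hvq; exact hv⟩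
  | Sum.inr _, h => absurd h (by simp)

theorem actIso_inl_image (V : Set A) (hV : IsSubact S V)
    (hU : IsSubact S (Sum.inl '' V : Set (A ⊕ B))) :
    @ActIso S _ _ _ hU.ract hV.ract := by
  refine ⟨⟨fun x => unInl x.1 x.2, fun v => ⟨Sum.inl v.1, ⟨v.1, v.2, rfl⟩⟩, ?_, ?_⟩, ?_⟩
  · rintro ⟨(a | b), h⟩
    · exact Subtype.ext rfl
    · exact absurd h (by simp)
  · intro v; rfl
  · rintro ⟨(a | b), h⟩ s
    · exact Subtype.ext rfl
    · exact absurd h (by simp)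

private def unInr {V : Set B} : ∀ x : A ⊕ B, x ∈ (Sum.inr '' V : Set (A ⊕ B)) → V
  | Sum.inr b, h => ⟨b, by rcases h with ⟨v, hv, hvq⟩; cases hvq; exact hv⟩
  | Sum.inl _, h => absurd h (by simp)

theorem actIso_inr_image (V : Set B) (hV : IsSubact S V)
    (hU : IsSubact S (Sum.inr '' V : Set (A ⊕ B))) :
    @ActIso S _ _ _ hU.ract hV.ract := by
  refine ⟨⟨fun x => unInr x.1 x.2, fun v => ⟨Sum.inr v.1, ⟨v.1, v.2, rfl⟩⟩, ?_, ?_⟩, ?_⟩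
  · rintro ⟨(a | b), h⟩
    · exact absurd h (by simp)
    · exact Subtype.ext rfl
  · intro v; rfl
  · rintro ⟨(a | b), h⟩ s
    · exact absurd h (by simp)
    · exact Subtype.ext rfl

theorem conn_inl {a a' : A} (h : Relation.EqvGen (connStep S A) a a') :
    Relation.EqvGen (connStep S (A ⊕ B)) (Sum.inl a) (Sum.inl a') := by
  induction h with
  | rel x y hxy => obtain ⟨s, rfl⟩ := hxy; exact Relation.EqvGen.rel _ _ ⟨s, rfl⟩
  | refl x => exact Relation.EqvGen.refl _
  | symm x y _ ih => exact Relation.EqvGen.symm _ _ ih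
  | trans x y z _ _ ih1 ih2 => exact Relation.EqvGen.trans _ _ _ ih1 ih2

theorem conn_inr {b b' : B} (h : Relation.EqvGen (connStep S B) b b') :
    Relation.EqvGen (connStep S (A ⊕ B)) (Sum.inr b) (Sum.inr b') := by
  induction h with
  | rel x y hxy => obtain ⟨s, rfl⟩ := hxy; exact Relation.EqvGen.rel _ _ ⟨s, rfl⟩
  | refl x => exact Relation.EqvGen.refl _
  | symm x y _ ih => exact Relation.EqvGen.symm _ _ ih
  | trans x y z _ _ ih1 ih2 => exact Relation.EqvGen.trans _ _ _ ih1 ih2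

/-- The components of a coproduct. -/
noncomputable def sumCQ : CQ S (A ⊕ B) ≃ CQ S A ⊕ CQ S B where
  toFun := Quotient.lift (fun x => Sum.map (cmk S) (cmk S) x) (by
    intro x y h
    induction h with
    | rel x y hxy =>
        obtain ⟨s, rfl⟩ := hxy
        rcases x with a | b
        · show Sum.inl (cmk S a) = Sum.inl (cmk S (RAct.act a s))
          rw [cmk_act]
        · show Sum.inr (cmk S b) = Sum.inr (cmk S (RAct.act b s))
          rw [cmk_act]
    | refl x => rfl
    | symm x y _ ih => exact ih.symm
    | trans x y z _ _ ih1 ih2 => exact ih1.trans ih2)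
  invFun := Sum.elim
    (Quotient.lift (fun a => cmk S (Sum.inl a : A ⊕ B))
      (fun a a' h => Quotient.sound (conn_inl S h)))
    (Quotient.lift (fun b => cmk S (Sum.inr b : A ⊕ B))
      (fun b b' h => Quotient.sound (conn_inr S h)))
  left_inv := by
    apply Quotient.ind
    rintro (a | b) <;> rfl
  right_inv := by
    rintro (q | q) <;> induction q using Quotient.ind <;> rfl

theorem sumCQ_cmk_inl (a : A) : sumCQ S (cmk S (Sum.inl a : A ⊕ B)) = Sum.inl (cmk S a) := rfl
theorem sumCQ_cmk_inr (b : B) : sumCQ S (cmk S (Sum.inr b : A ⊕ B)) = Sum.inr (cmk S b) := rfl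

theorem cfiber_sumCQ_inl (q : CQ S A) :
    cfiber S ((sumCQ S (A := A) (B := B)).symm (Sum.inl q)) = Sum.inl '' cfiber S q := by
  ext x
  rcases x with a | b
  · simp only [cfiber, Set.mem_setOf_eq, Set.mem_image]
    constructor
    · intro h
      have h2 : (sumCQ S) (cmk S (Sum.inl a : A ⊕ B)) = Sum.inl q := by
        rw [h, Equiv.apply_symm_apply]
      rw [sumCQ_cmk_inl] at h2
      exact ⟨a, Sum.inl.inj h2, rfl⟩
    · rintro ⟨a', ha', hh⟩
      cases hh
      rw [Equiv.eq_symm_apply, sumCQ_cmk_inl, ha']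
  · simp only [cfiber, Set.mem_setOf_eq, Set.mem_image]
    constructor
    · intro h
      have h2 : (sumCQ S) (cmk S (Sum.inr b : A ⊕ B)) = Sum.inl q := by
        rw [h, Equiv.apply_symm_apply]
      rw [sumCQ_cmk_inr] at h2
      exact absurd h2 (by simp)
    · rintro ⟨a', _, hh⟩
      cases hh
  
theorem cfiber_sumCQ_inr (q : CQ S B) :
    cfiber S ((sumCQ S (A := A) (B := B)).symm (Sum.inr q)) = Sum.inr '' cfiber S q := by
  ext x
  rcases x with a | b
  · simp only [cfiber, Set.mem_setOf_eq, Set.mem_image]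
    constructor
    · intro h
      have h2 : (sumCQ S) (cmk S (Sum.inl a : A ⊕ B)) = Sum.inr q := by
        rw [h, Equiv.apply_symm_apply]
      rw [sumCQ_cmk_inl] at h2
      exact absurd h2 (by simp)
    · rintro ⟨a', _, hh⟩
      cases hh
  · simp only [cfiber, Set.mem_setOf_eq, Set.mem_image]
    constructor
    · intro h
      have h2 : (sumCQ S) (cmk S (Sum.inr b : A ⊕ B)) = Sum.inr q := by
        rw [h, Equiv.apply_symm_apply]
      rw [sumCQ_cmk_inr] at h2
      exact ⟨b, Sum.inr.inj h2, rfl⟩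
    · rintro ⟨b', hb', hh⟩
      cases hh
      rw [Equiv.eq_symm_apply, sumCQ_cmk_inr, hb']

theorem actIso_cfiber_sum_inl (q : CQ S A) :
    ActIso S (cfiber S ((sumCQ S (A := A) (B := B)).symm (Sum.inl q))) (cfiber S q) := by
  have himg : IsSubact S (Sum.inl '' cfiber S q : Set (A ⊕ B)) := by
    rw [← cfiber_sumCQ_inl S q]; exact cfiber_subact S _
  letI : RAct S (Sum.inl '' cfiber S q : Set (A ⊕ B)) := himg.ract
  have h1 : ActIso S (cfiber S ((sumCQ S (A := A) (B := B)).symm (Sum.inl q)))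
      (Sum.inl '' cfiber S q : Set (A ⊕ B)) :=
    actIso_of_eq S (cfiber_sumCQ_inl S q) _ himg
  have h2 : ActIso S (Sum.inl '' cfiber S q : Set (A ⊕ B)) (cfiber S q) :=
    actIso_inl_image S (cfiber S q) (cfiber_subact S q) himg
  exact ActIso.trans S h1 h2

theorem actIso_cfiber_sum_inr (q : CQ S B) :
    ActIso S (cfiber S ((sumCQ S (A := A) (B := B)).symm (Sum.inr q))) (cfiber S q) := by
  have himg : IsSubact S (Sum.inr '' cfiber S q : Set (A ⊕ B)) := by
    rw [← cfiber_sumCQ_inr S q]; exact cfiber_subact S _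
  letI : RAct S (Sum.inr '' cfiber S q : Set (A ⊕ B)) := himg.ract
  have h1 : ActIso S (cfiber S ((sumCQ S (A := A) (B := B)).symm (Sum.inr q)))
      (Sum.inr '' cfiber S q : Set (A ⊕ B)) :=
    actIso_of_eq S (cfiber_sumCQ_inr S q) _ himg
  have h2 : ActIso S (Sum.inr '' cfiber S q : Set (A ⊕ B)) (cfiber S q) :=
    actIso_inr_image S (cfiber S q) (cfiber_subact S q) himg
  exact ActIso.trans S h1 h2

end SumConn

section Partition
variable {S : Type u} [Monoid S] {A : Type u} [RAct S A]
variable {I : Type u} {T : I → Set A}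

theorem exists_block (hcover : (⋃ i, T i) = Set.univ) (a : A) : ∃ i, a ∈ T i := by
  have : a ∈ ⋃ i, T i := by rw [hcover]; trivial
  simpa using this

theorem block_unique (hdisj : ∀ i j, i ≠ j → T i ∩ T j = ∅) {a : A} {i j : I}
    (hi : a ∈ T i) (hj : a ∈ T j) : i = j := by
  by_contra h
  have : a ∈ T i ∩ T j := ⟨hi, hj⟩
  rw [hdisj i j h] at this
  exact this

noncomputable def blockIdx (hcover : (⋃ i, T i) = Set.univ) (a : A) : I :=
  (exists_block hcover a).choose

theorem blockIdx_spec (hcover : (⋃ i, T i) = Set.univ) (a : A) :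
    a ∈ T (blockIdx hcover a) := (exists_block hcover a).choose_spec

theorem blockIdx_eq (hdisj : ∀ i j, i ≠ j → T i ∩ T j = ∅) (hcover : (⋃ i, T i) = Set.univ)
    {a : A} {i : I} (h : a ∈ T i) : blockIdx hcover a = i :=
  block_unique hdisj (blockIdx_spec hcover a) h

/-- Any two elements of an indecomposable subact are connected. -/
theorem conn_of_mem_indecomp {U : Set A} (hU : IndecompSubact S U) {a b : A}
    (ha : a ∈ U) (hb : b ∈ U) : cmk S a = cmk S b := by
  by_contra hne
  apply hU.2
  refine ⟨{x | x ∈ U ∧ cmk S x = cmk S b}, {x | x ∈ U ∧ cmk S x ≠ cmk S b}, ⟨⟨b, hb, rfl⟩, ?_⟩,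
    ⟨⟨a, ha, hne⟩, ?_⟩, ?_, ?_⟩
  · rintro x ⟨hxU, hx⟩ s
    exact ⟨hU.1.2 x hxU s, by rw [cmk_act, hx]⟩
  · rintro x ⟨hxU, hx⟩ s
    exact ⟨hU.1.2 x hxU s, by rw [cmk_act]; exact hx⟩
  · ext x
    constructor
    · rintro (⟨h, _⟩ | ⟨h, _⟩) <;> exact h
    · intro hx
      by_cases hc : cmk S x = cmk S b
      · exact Or.inl ⟨hx, hc⟩
      · exact Or.inr ⟨hx, hc⟩
  · ext x
    simp only [Set.mem_inter_iff, Set.mem_setOf_eq, Set.mem_empty_iff_false, iff_false]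
    rintro ⟨⟨_, h1⟩, ⟨_, h2⟩⟩
    exact h2 h1

theorem blockIdx_conn (hind : ∀ i, IndecompSubact S (T i))
    (hdisj : ∀ i j, i ≠ j → T i ∩ T j = ∅) (hcover : (⋃ i, T i) = Set.univ)
    {a b : A} (h : Relation.EqvGen (connStep S A) a b) :
    blockIdx hcover a = blockIdx hcover b := by
  induction h with
  | rel x y hxy =>
      obtain ⟨s, rfl⟩ := hxy
      have hx := blockIdx_spec hcover x
      have : RAct.act x s ∈ T (blockIdx hcover x) := (hind _).1.2 x hx s
      exact (blockIdx_eq hdisj hcover this).symm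
  | refl x => rfl
  | symm x y _ ih => exact ih.symm
  | trans x y z _ _ ih1 ih2 => exact ih1.trans ih2

theorem cmk_eq_iff_blockIdx (hind : ∀ i, IndecompSubact S (T i))
    (hdisj : ∀ i j, i ≠ j → T i ∩ T j = ∅) (hcover : (⋃ i, T i) = Set.univ) {a b : A} :
    cmk S a = cmk S b ↔ blockIdx hcover a = blockIdx hcover b := by
  constructor
  · intro h
    exact blockIdx_conn hind hdisj hcover (Quotient.exact h)
  · intro h
    exact conn_of_mem_indecomp (hind (blockIdx hcover b)) (h ▸ blockIdx_spec hcover a)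
      (blockIdx_spec hcover b)

noncomputable def blockEquiv (hind : ∀ i, IndecompSubact S (T i))
    (hdisj : ∀ i j, i ≠ j → T i ∩ T j = ∅) (hcover : (⋃ i, T i) = Set.univ) :
    I ≃ CQ S A where
  toFun i := cmk S (hind i).1.1.choose
  invFun q := blockIdx hcover q.out
  left_inv i := by
    show blockIdx hcover (cmk S (hind i).1.1.choose).out = i
    have h1 : cmk S ((cmk S (hind i).1.1.choose).out) = cmk S (hind i).1.1.choose :=
      Quotient.out_eq _
    rw [(cmk_eq_iff_blockIdx hind hdisj hcover).1 h1]
    exact blockIdx_eq hdisj hcover (hind i).1.1.choose_spec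
  right_inv q := by
    have hmem : q.out ∈ T (blockIdx hcover q.out) := blockIdx_spec hcover q.out
    have h := conn_of_mem_indecomp (hind (blockIdx hcover q.out))
      (hind (blockIdx hcover q.out)).1.1.choose_spec hmem
    show cmk S _ = q
    rw [h]
    exact Quotient.out_eq q

theorem cfiber_blockEquiv (hind : ∀ i, IndecompSubact S (T i))
    (hdisj : ∀ i j, i ≠ j → T i ∩ T j = ∅) (hcover : (⋃ i, T i) = Set.univ) (i : I) :
    cfiber S (blockEquiv hind hdisj hcover i) = T i := by
  ext x
  show cmk S x = cmk S (hind i).1.1.choose ↔ x ∈ T i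
  rw [cmk_eq_iff_blockIdx hind hdisj hcover,
    blockIdx_eq hdisj hcover (hind i).1.1.choose_spec]
  constructor
  · intro h
    exact h ▸ blockIdx_spec hcover x
  · intro h
    exact blockIdx_eq hdisj hcover h

theorem actIso_cfiber_block (hind : ∀ i, IndecompSubact S (T i))
    (hdisj : ∀ i j, i ≠ j → T i ∩ T j = ∅) (hcover : (⋃ i, T i) = Set.univ) (i : I) :
    @ActIso S _ (cfiber S (blockEquiv hind hdisj hcover i)) (T i) _ (hind i).1.ract := by
  exact actIso_of_eq S (cfiber_blockEquiv hind hdisj hcover i) _ (hind i).1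

theorem sigma_subtype_ext {F : I → Set A} {i i' : I} (h : i = i') (x : F i) (x' : F i')
    (hx : x.1 = x'.1) : (⟨i, x⟩ : Σ j, F j) = ⟨i', x'⟩ := by
  subst h
  rw [Subtype.ext hx]

/-- `A` is isomorphic to the disjoint union of the blocks of a partition into subacts. -/
theorem actIso_sigma_blocks (hind : ∀ i, IndecompSubact S (T i))
    (hdisj : ∀ i j, i ≠ j → T i ∩ T j = ∅) (hcover : (⋃ i, T i) = Set.univ) :
    @ActIso S _ A (Σ i, T i) _ (@sigmaRAct S _ I (fun i => (T i : Type u))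
      (fun i => (hind i).1.ract)) := by
  letI : ∀ i, RAct S (T i) := fun i => (hind i).1.ract
  refine ⟨⟨fun a => ⟨blockIdx hcover a, ⟨a, blockIdx_spec hcover a⟩⟩, fun x => x.2.1, ?_, ?_⟩, ?_⟩
  · intro a; rfl
  · rintro ⟨i, ⟨a, ha⟩⟩
    have h : blockIdx hcover a = i := blockIdx_eq hdisj hcover ha
    exact sigma_subtype_ext h _ _ rfl
  · intro a s
    show (⟨blockIdx hcover (RAct.act a s), _⟩ : Σ i, T i) = ⟨blockIdx hcover a, _⟩
    have h : blockIdx hcover (RAct.act a s) = blockIdx hcover a :=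
      blockIdx_eq hdisj hcover ((hind _).1.2 a (blockIdx_spec hcover a) s)
    exact sigma_subtype_ext h _ _ rfl

end Partition

section Counting
variable (S : Type u) [Monoid S] (A B C : Type u) [RAct S A] [RAct S B] [RAct S C]

def Lam : Type u := CQ S (A ⊕ B) ⊕ CQ S (A ⊕ C)

def lamFib : Lam S A B C → Type u := fun x =>
  match x with
  | .inl q => cfiber S q
  | .inr q => cfiber S q

instance lamFibRAct : ∀ x : Lam S A B C, RAct S (lamFib S A B C x) := fun x =>
  match x with
  | .inl q => cfiberRAct S q
  | .inr q => cfiberRAct S q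

instance lamFibRActInl (q : CQ S (A ⊕ B)) : RAct S (lamFib S A B C (Sum.inl q)) :=
  lamFibRAct S A B C _

instance lamFibRActInr (q : CQ S (A ⊕ C)) : RAct S (lamFib S A B C (Sum.inr q)) :=
  lamFibRAct S A B C _

def lamSetoid : Setoid (Lam S A B C) :=
  ⟨fun x y => ActIso S (lamFib S A B C x) (lamFib S A B C y),
   ⟨fun _ => ActIso.refl S _, fun h => ActIso.symm S h, fun h1 h2 => ActIso.trans S h1 h2⟩⟩

def Theta : Type u := Quotient (lamSetoid S A B C)

noncomputable def thA : CQ S A → Theta S A B C := fun q =>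
  Quotient.mk _ (Sum.inl ((sumCQ S).symm (Sum.inl q)))

noncomputable def thA' : CQ S A → Theta S A B C := fun q =>
  Quotient.mk _ (Sum.inr ((sumCQ S).symm (Sum.inl q)))

noncomputable def thB : CQ S B → Theta S A B C := fun q =>
  Quotient.mk _ (Sum.inl ((sumCQ S).symm (Sum.inr q)))

noncomputable def thC : CQ S C → Theta S A B C := fun q =>
  Quotient.mk _ (Sum.inr ((sumCQ S).symm (Sum.inr q)))

theorem thA_eq_thA' (q : CQ S A) : thA S A B C q = thA' S A B C q :=
  Quotient.sound (ActIso.trans S (actIso_cfiber_sum_inl S q)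
    (ActIso.symm S (actIso_cfiber_sum_inl S q)))

theorem actIso_of_thA_eq {q q' : CQ S A} (h : thA S A B C q = thA S A B C q') :
    ActIso S (cfiber S q) (cfiber S q') :=
  ActIso.trans S (ActIso.symm S (actIso_cfiber_sum_inl S (B := B) q))
    (ActIso.trans S (Quotient.exact h) (actIso_cfiber_sum_inl S q'))

theorem actIso_of_thB_eq_thC {q : CQ S B} {q' : CQ S C} (h : thB S A B C q = thC S A B C q') :
    ActIso S (cfiber S q) (cfiber S q') :=
  ActIso.trans S (ActIso.symm S (actIso_cfiber_sum_inr S (A := A) q))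
    (ActIso.trans S (Quotient.exact h) (actIso_cfiber_sum_inr S q'))

theorem theta_card (e : (A ⊕ B) ≃ (A ⊕ C))
    (he : ∀ (a : A ⊕ B) (s : S), e (RAct.act a s) = RAct.act (e a) s) (θ : Theta S A B C) :
    Cardinal.mk {q : CQ S A // thA S A B C q = θ} + Cardinal.mk {q : CQ S B // thB S A B C q = θ}
      = Cardinal.mk {q : CQ S A // thA S A B C q = θ}
        + Cardinal.mk {q : CQ S C // thC S A B C q = θ} := by
  have key1 : ∀ x : CQ S (A ⊕ B),
      (Quotient.mk (lamSetoid S A B C) (Sum.inr (cqEquiv S e he x))) =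
        Quotient.mk (lamSetoid S A B C) (Sum.inl x) :=
    fun x => Quotient.sound (ActIso.symm S (cfiber_actIso S e he x))
  have E3 : {x : CQ S (A ⊕ B) // Quotient.mk (lamSetoid S A B C) (Sum.inl x) = θ}
      ≃ {y : CQ S (A ⊕ C) // Quotient.mk (lamSetoid S A B C) (Sum.inr y) = θ} :=
    Equiv.subtypeEquiv (cqEquiv S e he) (fun x => by rw [key1 x])
  have E1 : {x : CQ S (A ⊕ B) // Quotient.mk (lamSetoid S A B C) (Sum.inl x) = θ}
      ≃ {q : CQ S A // thA S A B C q = θ} ⊕ {q : CQ S B // thB S A B C q = θ} := by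
    refine Equiv.trans (Equiv.subtypeEquiv (sumCQ S)
      (q := fun z => Quotient.mk (lamSetoid S A B C) (Sum.inl ((sumCQ S).symm z)) = θ)
      (fun x => by simp only [Equiv.symm_apply_apply])) ?_
    exact Equiv.subtypeSum
  have E2 : {y : CQ S (A ⊕ C) // Quotient.mk (lamSetoid S A B C) (Sum.inr y) = θ}
      ≃ {q : CQ S A // thA S A B C q = θ} ⊕ {q : CQ S C // thC S A B C q = θ} := by
    refine Equiv.trans (Equiv.subtypeEquiv (sumCQ S)
      (q := fun z => Quotient.mk (lamSetoid S A B C) (Sum.inr ((sumCQ S).symm z)) = θ)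
      (fun x => by simp only [Equiv.symm_apply_apply])) ?_
    refine Equiv.trans Equiv.subtypeSum ?_
    refine Equiv.sumCongr (Equiv.subtypeEquivRight ?_) (Equiv.refl _)
    intro q
    rw [show (Quotient.mk (lamSetoid S A B C) (Sum.inr ((sumCQ S).symm (Sum.inl q))) : Theta S A B C) = thA' S A B C q from rfl, ← thA_eq_thA']
    exact Iff.rfl
  have hmk : Cardinal.mk ({q : CQ S A // thA S A B C q = θ} ⊕ {q : CQ S B // thB S A B C q = θ})
      = Cardinal.mk ({q : CQ S A // thA S A B C q = θ} ⊕ {q : CQ S C // thC S A B C q = θ}) :=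
    Cardinal.mk_congr (E1.symm.trans (E3.trans E2))
  rw [Cardinal.mk_sum, Cardinal.mk_sum] at hmk
  simpa using hmk

end Counting

section Infinite
variable {S : Type u} [Monoid S] {A : Type u} [RAct S A]

/-- An indecomposable subact is not isomorphic to a coproduct of two nonempty acts. -/
theorem indecomp_not_iso_sum {U : Set A} (hU : IndecompSubact S U)
    (B C : Type u) [RAct S B] [RAct S C] [Nonempty B] [Nonempty C] :
    ¬ @ActIso S _ U (B ⊕ C) hU.1.ract _ := by
  letI : RAct S U := hU.1.ract
  rintro ⟨e, he⟩
  apply hU.2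
  refine ⟨{a | ∃ h : a ∈ U, (e ⟨a, h⟩).isLeft = true},
    {a | ∃ h : a ∈ U, (e ⟨a, h⟩).isRight = true}, ⟨?_, ?_⟩, ⟨?_, ?_⟩, ?_, ?_⟩
  · obtain ⟨b⟩ := ‹Nonempty B›
    refine ⟨(e.symm (Sum.inl b)).1, (e.symm (Sum.inl b)).2, ?_⟩
    rw [show (⟨(e.symm (Sum.inl b)).1, (e.symm (Sum.inl b)).2⟩ : U) = e.symm (Sum.inl b) from rfl,
      e.apply_symm_apply]
    rfl
  · rintro a ⟨h, hL⟩ s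
    refine ⟨hU.1.2 a h s, ?_⟩
    have h2 : (⟨RAct.act a s, hU.1.2 a h s⟩ : U) = RAct.act (⟨a, h⟩ : U) s := rfl
    rw [h2, he]
    rcases he2 : e ⟨a, h⟩ with b | c
    · rfl
    · rw [he2] at hL; simp at hL
  · obtain ⟨c⟩ := ‹Nonempty C›
    refine ⟨(e.symm (Sum.inr c)).1, (e.symm (Sum.inr c)).2, ?_⟩
    rw [show (⟨(e.symm (Sum.inr c)).1, (e.symm (Sum.inr c)).2⟩ : U) = e.symm (Sum.inr c) from rfl,
      e.apply_symm_apply]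
    rfl
  · rintro a ⟨h, hR⟩ s
    refine ⟨hU.1.2 a h s, ?_⟩
    have h2 : (⟨RAct.act a s, hU.1.2 a h s⟩ : U) = RAct.act (⟨a, h⟩ : U) s := rfl
    rw [h2, he]
    rcases he2 : e ⟨a, h⟩ with b | c
    · rw [he2] at hR; simp at hR
    · rfl
  · ext a
    constructor
    · rintro (⟨h, _⟩ | ⟨h, _⟩) <;> exact h
    · intro h
      rcases he2 : e ⟨a, h⟩ with b | c
      · exact Or.inl ⟨h, by rw [he2]; rfl⟩
      · exact Or.inr ⟨h, by rw [he2]; rfl⟩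
  · ext a
    simp only [Set.mem_inter_iff, Set.mem_setOf_eq, Set.mem_empty_iff_false, iff_false]
    rintro ⟨⟨h1, hL⟩, ⟨h2, hR⟩⟩
    have : (⟨a, h1⟩ : U) = ⟨a, h2⟩ := rfl
    rw [this] at hL
    rcases he2 : e ⟨a, h2⟩ with b | c
    · rw [he2] at hR; simp at hR
    · rw [he2] at hL; simp at hL

variable {I : Type u} {T : I → Set A}

/-- If some isomorphism class of blocks is infinite, one copy of the block is absorbed. -/
theorem actIso_absorb (hind : ∀ i, IndecompSubact S (T i))
    (hdisj : ∀ i j, i ≠ j → T i ∩ T j = ∅) (hcover : (⋃ i, T i) = Set.univ) (i₀ : I)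
    (hinf : {j : I | SubactIso (hind i₀).1 (hind j).1}.Infinite) :
    @ActIso S _ (A ⊕ (T i₀)) A (@sumRAct S _ A (T i₀) _ (hind i₀).1.ract) _ := by
  classical
  letI : ∀ i, RAct S (T i) := fun i => (hind i).1.ract
  set p : I → Prop := fun j => j ∈ {j : I | SubactIso (hind i₀).1 (hind j).1} with hp
  haveI : Infinite {j // p j} := Set.infinite_coe_iff.2 hinf
  set G : {j // p j} ⊕ {j // ¬ p j} → Type u := fun x => T ((Equiv.sumCompl p) x) with hG
  letI : ∀ x, RAct S (G x) := fun x => (hind ((Equiv.sumCompl p) x)).1.ract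
  -- A ≅ Σ i, T i ≅ Σ x, G x ≅ (Σ j : J, G (inl j)) ⊕ R
  have e1 : ActIso S A (Σ i, T i) := actIso_sigma_blocks hind hdisj hcover
  have e2 : ActIso S (Σ i, T i) (Σ x, G x) := by
    refine ActIso.sigmaCongr S _ _ (Equiv.sumCompl p).symm (fun i => ?_)
    have h : T i = T ((Equiv.sumCompl p) ((Equiv.sumCompl p).symm i)) := by
      rw [Equiv.apply_symm_apply]
    exact actIso_of_eq S h (hind i).1 (hind _).1
  have e3 : ActIso S (Σ x, G x) ((Σ j, G (Sum.inl j)) ⊕ (Σ j, G (Sum.inr j))) :=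
    ActIso.sigmaSum S G
  -- each block in the class is iso to T i₀
  have e4 : ActIso S (Σ j : {j // p j}, G (Sum.inl j)) (Σ _ : {j // p j}, (T i₀ : Type u)) := by
    refine ActIso.sigmaCongr S _ _ (Equiv.refl _) (fun j => ?_)
    exact ActIso.symm S j.2
  -- absorption of one extra copy
  have eJ : Nonempty (({j // p j} ⊕ PUnit.{u+1}) ≃ {j // p j}) := by
    rw [← Cardinal.eq, Cardinal.mk_sum, Cardinal.mk_punit, Cardinal.lift_id, Cardinal.lift_id]
    exact Cardinal.add_one_eq (Cardinal.aleph0_le_mk _)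
  have e5 : ActIso S ((Σ _ : {j // p j}, (T i₀ : Type u)) ⊕ (T i₀ : Type u))
      (Σ _ : {j // p j}, (T i₀ : Type u)) := by
    have s1 : ActIso S ((Σ _ : {j // p j}, (T i₀ : Type u)) ⊕ (T i₀ : Type u))
        ((Σ _ : {j // p j}, (T i₀ : Type u)) ⊕ (Σ _ : PUnit.{u+1}, (T i₀ : Type u))) :=
      ActIso.sumCongr S (ActIso.refl S _) (ActIso.symm S (ActIso.sigmaPUnit S _))
    have s2 : ActIso S ((Σ _ : {j // p j}, (T i₀ : Type u)) ⊕ (Σ _ : PUnit.{u+1}, (T i₀ : Type u)))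
        (Σ _ : {j // p j} ⊕ PUnit.{u+1}, (T i₀ : Type u)) :=
      ActIso.symm S (ActIso.sigmaSum S (fun _ => (T i₀ : Type u)))
    have s3 : ActIso S (Σ _ : {j // p j} ⊕ PUnit.{u+1}, (T i₀ : Type u))
        (Σ _ : {j // p j}, (T i₀ : Type u)) :=
      ActIso.sigmaCongr S _ _ eJ.some (fun _ => ActIso.refl S _)
    exact ActIso.trans S s1 (ActIso.trans S s2 s3)
  -- assemble
  set P := Σ j : {j // p j}, G (Sum.inl j) with hP
  set R := Σ j : {j // ¬ p j}, G (Sum.inr j) with hR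
  set P' := Σ _ : {j // p j}, (T i₀ : Type u) with hP'
  have hA : ActIso S A (P ⊕ R) := ActIso.trans S e1 (ActIso.trans S e2 e3)
  have hPB : ActIso S (P ⊕ (T i₀ : Type u)) P := by
    have t1 : ActIso S (P ⊕ (T i₀ : Type u)) (P' ⊕ (T i₀ : Type u)) :=
      ActIso.sumCongr S e4 (ActIso.refl S _)
    exact ActIso.trans S t1 (ActIso.trans S e5 (ActIso.symm S e4))
  -- (P ⊕ R) ⊕ B ≅ (P ⊕ B) ⊕ R ≅ P ⊕ R ≅ A
  have main : ActIso S (A ⊕ (T i₀ : Type u)) ((P ⊕ (T i₀ : Type u)) ⊕ R) := by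
    have t1 : ActIso S (A ⊕ (T i₀ : Type u)) ((P ⊕ R) ⊕ (T i₀ : Type u)) :=
      ActIso.sumCongr S hA (ActIso.refl S _)
    have t2 : ActIso S ((P ⊕ R) ⊕ (T i₀ : Type u)) (P ⊕ (R ⊕ (T i₀ : Type u))) :=
      ActIso.sumAssoc S _ _ _
    have t3 : ActIso S (P ⊕ (R ⊕ (T i₀ : Type u))) (P ⊕ ((T i₀ : Type u) ⊕ R)) :=
      ActIso.sumCongr S (ActIso.refl S _) (ActIso.sumComm S _ _)
    have t4 : ActIso S (P ⊕ ((T i₀ : Type u) ⊕ R)) ((P ⊕ (T i₀ : Type u)) ⊕ R) :=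
      ActIso.symm S (ActIso.sumAssoc S _ _ _)
    exact ActIso.trans S t1 (ActIso.trans S t2 (ActIso.trans S t3 t4))
  have fin : ActIso S ((P ⊕ (T i₀ : Type u)) ⊕ R) A := by
    have t5 : ActIso S ((P ⊕ (T i₀ : Type u)) ⊕ R) (P ⊕ R) :=
      ActIso.sumCongr S hPB (ActIso.refl S _)
    exact ActIso.trans S t5 (ActIso.symm S hA)
  exact ActIso.trans S main fin

end Infinite

/-- Let `A = ⨆_{i ∈ I} A_i` be the decomposition of `A` into
indecomposable subacts, and suppose the set `P = {Card [i] : i ∈ I}` of cardinalities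
of the isomorphism classes `[i] = {j : A_i ≅ A_j}` is finite. Then `A` is cancellable
iff every class `[i]` is finite. -/
theorem cancellable_iff_classes_finite (S : Type u) [Monoid S] (A : Type u)
    [RAct S A] [Nonempty A] (I : Type u) (T : I → Set A)
    (hind : ∀ i, IndecompSubact S (T i))
    (hdisj : ∀ i j, i ≠ j → T i ∩ T j = ∅)
    (hcover : (⋃ i, T i) = Set.univ)
    (hP : {c : Cardinal.{u} |
      ∃ i : I, c = Cardinal.mk {j : I | SubactIso (hind i).1 (hind j).1}}.Finite) :
    Cancellable S A ↔ ∀ i : I, {j : I | SubactIso (hind i).1 (hind j).1}.Finite := by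
  classical
  letI instT : ∀ i, RAct S (T i) := fun i => (hind i).1.ract
  constructor
  · -- cancellable → all classes finite
    intro hc i₀
    by_contra hfin
    have hinf : {j : I | SubactIso (hind i₀).1 (hind j).1}.Infinite := hfin
    have habs : ActIso S (A ⊕ (T i₀ : Type u)) A :=
      actIso_absorb hind hdisj hcover i₀ hinf
    haveI : Nonempty (T i₀ : Type u) := ⟨⟨(hind i₀).1.1.choose, (hind i₀).1.1.choose_spec⟩⟩
    have hiso : ActIso S (A ⊕ (T i₀ : Type u)) (A ⊕ ((T i₀ : Type u) ⊕ (T i₀ : Type u))) := by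
      have h1 : ActIso S (A ⊕ ((T i₀ : Type u) ⊕ (T i₀ : Type u)))
          ((A ⊕ (T i₀ : Type u)) ⊕ (T i₀ : Type u)) :=
        ActIso.symm S (ActIso.sumAssoc S _ _ _)
      have h2 : ActIso S ((A ⊕ (T i₀ : Type u)) ⊕ (T i₀ : Type u)) (A ⊕ (T i₀ : Type u)) :=
        ActIso.sumCongr S habs (ActIso.refl S _)
      have h3 : ActIso S (A ⊕ ((T i₀ : Type u) ⊕ (T i₀ : Type u))) A :=
        ActIso.trans S h1 (ActIso.trans S h2 habs)
      exact ActIso.trans S habs (ActIso.symm S h3)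
    have hBC := hc (T i₀ : Type u) ((T i₀ : Type u) ⊕ (T i₀ : Type u)) hiso
    exact indecomp_not_iso_sum (hind i₀) _ _ hBC
  · -- all classes finite → cancellable
    intro hfin B C instB instC neB neC hiso
    obtain ⟨e, he⟩ := hiso
    have hfinA : ∀ θ : Theta S A B C,
        Cardinal.mk {q : CQ S A // thA S A B C q = θ} < Cardinal.aleph0 := by
      intro θ
      rcases isEmpty_or_nonempty {q : CQ S A // thA S A B C q = θ} with hE | hNE
      · exact Cardinal.lt_aleph0_of_finite _
      · obtain ⟨⟨q₀, hq₀⟩⟩ := hNE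
        set eI := blockEquiv hind hdisj hcover with heI
        have g : ∀ r : CQ S A, ActIso S (cfiber S r) ((T (eI.symm r) : Type u)) := by
          intro r
          have h := actIso_cfiber_block hind hdisj hcover (eI.symm r)
          rw [← heI, Equiv.apply_symm_apply] at h
          exact h
        have key : ∀ q : CQ S A, thA S A B C q = θ →
            SubactIso (hind (eI.symm q₀)).1 (hind (eI.symm q)).1 := by
          intro q hq
          have h1 : thA S A B C q = thA S A B C q₀ := by rw [hq, hq₀]
          have h2 : ActIso S (cfiber S q) (cfiber S q₀) := actIso_of_thA_eq S A B C h1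
          exact ActIso.trans S (ActIso.symm S (g q₀))
            (ActIso.trans S (ActIso.symm S h2) (g q))
        haveI hF : Finite {j : I | SubactIso (hind (eI.symm q₀)).1 (hind j).1} :=
          (hfin (eI.symm q₀)).to_subtype
        haveI : Finite {q : CQ S A // thA S A B C q = θ} := by
          refine Finite.of_injective (fun x =>
            (⟨eI.symm x.1, key x.1 x.2⟩ :
              {j : I | SubactIso (hind (eI.symm q₀)).1 (hind j).1})) ?_
          intro x y hxy
          apply Subtype.ext
          exact eI.symm.injective (congrArg Subtype.val hxy)
        exact Cardinal.lt_aleph0_of_finite _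
    have hBCcard : ∀ θ : Theta S A B C,
        Cardinal.mk {q : CQ S B // thB S A B C q = θ}
          = Cardinal.mk {q : CQ S C // thC S A B C q = θ} :=
      fun θ => Cardinal.eq_of_add_eq_add_left (theta_card S A B C e he θ) (hfinA θ)
    have g : ∀ θ : Theta S A B C,
        {q : CQ S B // thB S A B C q = θ} ≃ {q : CQ S C // thC S A B C q = θ} :=
      fun θ => (Cardinal.eq.1 (hBCcard θ)).some
    let σ : CQ S B ≃ CQ S C :=
      (Equiv.sigmaFiberEquiv (thB S A B C)).symm.trans
        ((Equiv.sigmaCongrRight g).trans (Equiv.sigmaFiberEquiv (thC S A B C)))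
    have hσ : ∀ q, thC S A B C (σ q) = thB S A B C q := by
      intro q
      show thC S A B C ((g (thB S A B C q) ⟨q, rfl⟩).1) = thB S A B C q
      exact (g (thB S A B C q) ⟨q, rfl⟩).2
    have fib : ∀ q : CQ S B, ActIso S (cfiber S q) (cfiber S (σ q)) := fun q =>
      actIso_of_thB_eq_thC S A B C (hσ q).symm
    have m1 : ActIso S B (Σ q : CQ S B, cfiber S q) := actIso_sigma_cfiber S B
    have m2 : ActIso S (Σ q : CQ S B, cfiber S q) (Σ q : CQ S C, cfiber S q) :=
      ActIso.sigmaCongr S _ _ σ fib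
    have m3 : ActIso S (Σ q : CQ S C, cfiber S q) C := ActIso.symm S (actIso_sigma_cfiber S C)
    exact ActIso.trans S m1 (ActIso.trans S m2 m3)
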